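/- Fixed point count in a ball: Let L be a complete algebraically closed non-archimedean field of residual characteristic zero, φ ∈ L[ζ], and B, B′ closed balls with φ(B) = B′ ⊇ B. If deg_B(φ) > 1 or B is strictly contained in B′, then the number of fixed points of φ in B, counted with multiplicity, equals deg_B(φ). -/

import Mathlib

open Polynomial Metric Set

/-- The filled Julia set: points whose forward orbit does not escape to infinity. -/
def filledJulia {L : Type*} [NormedField L] (φ : Polynomial L) : Set L :=
  {z | ¬ Filter.Tendsto (fun n => ‖(fun w => φ.eval w)^[n] z‖) Filter.atTop Filter.atTop}

/-- The Julia set, the boundary of the filled Julia set. -/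
def juliaSet {L : Type*} [NormedField L] (φ : Polynomial L) : Set L :=
  frontier (filledJulia φ)

/-- The standard escape radius `R_φ`. -/
noncomputable def escapeRadius {L : Type*} [NormedField L] (φ : Polynomial L) : ℝ :=
  max (‖φ.leadingCoeff⁻¹‖ ^ ((1 : ℝ) / ((φ.natDegree : ℝ) - 1)))
    (⨆ i : Finset.range φ.natDegree,
      ‖φ.coeff i / φ.leadingCoeff‖ ^ ((1 : ℝ) / ((φ.natDegree : ℝ) - (i : ℕ))))

/-- A (closed) ball of positive radius. -/
def IsClosedBall {L : Type*} [NormedField L] (B : Set L) : Prop :=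
  ∃ a : L, ∃ r : ℝ, 0 < r ∧ B = Metric.closedBall a r

/-- A dynamical ball of level `n`: a maximal closed ball inside `φ^{-n}(D₀)` where
`D₀ = B⁺_{R_φ}(0)` is the level-0 ball. -/
def IsDynBall {L : Type*} [NormedField L] (φ : Polynomial L) (n : ℕ) (B : Set L) : Prop :=
  IsClosedBall B ∧
    B ⊆ (fun z => φ.eval z)^[n] ⁻¹' (Metric.closedBall 0 (escapeRadius φ)) ∧
    ∀ B', IsClosedBall B' → B ⊆ B' →
      B' ⊆ (fun z => φ.eval z)^[n] ⁻¹' (Metric.closedBall 0 (escapeRadius φ)) → B' = B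

/-- An end: a nested sequence of dynamical balls, one of each level. -/
def IsEnd {L : Type*} [NormedField L] (φ : Polynomial L) (E : ℕ → Set L) : Prop :=
  ∀ n, IsDynBall φ n (E n) ∧ E (n + 1) ⊆ E n

/-- The local degree `deg_z(φ)`: the multiplicity of `z` as a root of `φ - φ(z)`. -/
noncomputable def localDeg {K : Type*} [CommRing K] (φ : Polynomial K) (z : K) : ℕ :=
  Polynomial.rootMultiplicity z (φ - Polynomial.C (φ.eval z))

/-- `φ : B → B'` has a well-defined degree `d`: every point of `B'` has exactly `d`
preimages in `B` counted with local degree. -/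
def HasDegOn {K : Type*} [CommRing K] (φ : Polynomial K) (B B' : Set K) (d : ℕ) : Prop :=
  1 ≤ d ∧ ∀ w ∈ B', (∑ᶠ z ∈ {z ∈ B | φ.eval z = w}, localDeg φ z) = d

/-- A set is infraconnected if it cannot be split by two disjoint closed balls. -/
def Infraconnected {L : Type*} [NormedField L] (X : Set L) : Prop :=
  ∀ (a₀ : L) (r₀ : ℝ) (a₁ : L) (r₁ : ℝ),
    Disjoint (Metric.closedBall a₀ r₀) (Metric.closedBall a₁ r₁) →
    X ⊆ Metric.closedBall a₀ r₀ ∪ Metric.closedBall a₁ r₁ →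
    X ⊆ Metric.closedBall a₀ r₀ ∨ X ⊆ Metric.closedBall a₁ r₁

/-- The infraconnected component of `z` in the filled Julia set: the intersection of all
dynamical balls containing `z`. -/
def infraComp {L : Type*} [NormedField L] (φ : Polynomial L) (z : L) : Set L :=
  {w | ∀ n B, IsDynBall φ n B → z ∈ B → w ∈ B}

/-- The `p`-th iterate of `φ` as a polynomial. -/
noncomputable def polyIter {L : Type*} [CommRing L] (φ : Polynomial L) : ℕ → Polynomial L
  | 0 => Polynomial.X
  | n + 1 => φ.comp (polyIter φ n)

/-- The cubic family `φ_{α,β}(ζ) = ζ³ - 3α²ζ + β`. -/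
noncomputable def cubic {L : Type*} [NormedField L] (α β : L) : Polynomial L :=
  Polynomial.X ^ 3 - Polynomial.C (3 * α ^ 2) * Polynomial.X + Polynomial.C β

set_option linter.unusedSectionVars false
set_option linter.unusedVariables false
set_option maxHeartbeats 1000000
namespace FPC
variable {L : Type*} [NormedField L] [IsUltrametricDist L]
open IsUltrametricDist


lemma norm_sum_lt {ι : Type*} (s : Finset ι) (f : ι → L) {C : ℝ} (hC : 0 < C)
    (h : ∀ i ∈ s, ‖f i‖ < C) : ‖∑ i ∈ s, f i‖ < C := by
  rcases s.eq_empty_or_nonempty with rfl | hs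
  · simpa using hC
  · obtain ⟨i, hi, hle⟩ := exists_norm_finset_sum_le_of_nonempty hs f
    exact lt_of_le_of_lt hle (h i hi)

lemma norm_sum_eq_of_dominant {ι : Type*} [DecidableEq ι] {s : Finset ι} (f : ι → L) {i₀ : ι} (hi₀ : i₀ ∈ s)
    (h : ∀ i ∈ s, i ≠ i₀ → ‖f i‖ < ‖f i₀‖) : ‖∑ i ∈ s, f i‖ = ‖f i₀‖ := by
  rw [← Finset.add_sum_erase s f hi₀]
  rcases (s.erase i₀).eq_empty_or_nonempty with he | hne
  · rw [he]; simp
  · have hrest : ‖∑ i ∈ s.erase i₀, f i‖ < ‖f i₀‖ := by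
      refine norm_sum_lt _ _ ?_ ?_
      · obtain ⟨j, hj⟩ := hne
        exact lt_of_le_of_lt (norm_nonneg _)
          (h j (Finset.mem_of_mem_erase hj) (Finset.ne_of_mem_erase hj))
      · intro i hi
        exact h i (Finset.mem_of_mem_erase hi) (Finset.ne_of_mem_erase hi)
    rw [norm_add_eq_max_of_norm_ne_norm (by exact ne_of_gt hrest : ‖f i₀‖ ≠ _)]
    exact max_eq_left hrest.le



lemma monic_prod (m : Multiset L) : ((m.map fun ρ => X - C ρ).prod).Monic :=
  monic_multiset_prod_of_monic _ _ (fun ρ _ => monic_X_sub_C ρ)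

lemma norm_sub_le_max' (a b : L) : ‖a - b‖ ≤ max ‖a‖ ‖b‖ := by
  rw [sub_eq_add_neg]
  simpa using IsUltrametricDist.norm_add_le_max a (-b)

lemma natDeg_prod (m : Multiset L) : ((m.map fun ρ => X - C ρ).prod).natDegree = m.card := by
  rw [natDegree_multiset_prod_of_monic (t := m.map fun ρ => X - C ρ) (fun f hf => by
    obtain ⟨ρ, _, rfl⟩ := Multiset.mem_map.mp hf; exact monic_X_sub_C ρ)]
  simp [Multiset.map_map, Function.comp_def]

lemma prod_norm_pos (m : Multiset L) {r : ℝ} (hr : 0 < r) (hm : ∀ ρ ∈ m, r < ‖ρ‖) :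
    0 < (m.map fun ρ => ‖ρ‖).prod := by
  refine Multiset.prod_pos ?_
  intro x hx
  obtain ⟨ρ, hρ, rfl⟩ := Multiset.mem_map.mp hx
  exact lt_trans hr (hm ρ hρ)

lemma coeff_zero_norm (m : Multiset L) :
    ‖((m.map fun ρ => X - C ρ).prod).coeff 0‖ = (m.map fun ρ => ‖ρ‖).prod := by
  induction m using Multiset.induction_on with
  | empty => simp
  | cons ρ m ih =>
    rw [Multiset.map_cons, Multiset.prod_cons, mul_coeff_zero, Multiset.map_cons,
      Multiset.prod_cons, norm_mul, ← ih]
    simp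

lemma coeff_prod_le {t : ℝ} (ht : 0 ≤ t) (m : Multiset L) (hm : ∀ ρ ∈ m, ‖ρ‖ ≤ t) (i : ℕ) :
    ‖((m.map fun ρ => X - C ρ).prod).coeff i‖ ≤ t ^ (m.card - i) := by
  induction m using Multiset.induction_on generalizing i with
  | empty =>
    cases i with
    | zero => simp
    | succ j => simp [coeff_one]
  | cons ρ m ih =>
    have hρ : ‖ρ‖ ≤ t := hm ρ (Multiset.mem_cons_self _ _)
    have hm' : ∀ x ∈ m, ‖x‖ ≤ t := fun x hx => hm x (Multiset.mem_cons_of_mem hx)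
    rw [Multiset.map_cons, Multiset.prod_cons]
    cases i with
    | zero =>
      rw [mul_coeff_zero]
      simp only [coeff_sub, coeff_X_zero, coeff_C_zero, zero_sub, norm_mul, norm_neg]
      calc ‖ρ‖ * ‖((m.map fun ρ => X - C ρ).prod).coeff 0‖ ≤ t * t ^ (m.card - 0) :=
            mul_le_mul hρ (ih hm' 0) (norm_nonneg _) ht
        _ = t ^ ((ρ ::ₘ m).card - 0) := by
            rw [Multiset.card_cons, Nat.sub_zero, Nat.sub_zero, ← pow_succ']
    | succ j =>
      have hco : ((X - C ρ) * (m.map fun ρ => X - C ρ).prod).coeff (j + 1)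
          = ((m.map fun ρ => X - C ρ).prod).coeff j
            - ρ * ((m.map fun ρ => X - C ρ).prod).coeff (j + 1) := by
        rw [sub_mul, coeff_sub, coeff_X_mul, coeff_C_mul]
      rw [hco]
      have hcard : (ρ ::ₘ m).card - (j + 1) = m.card - j := by
        rw [Multiset.card_cons]; omega
      rw [hcard]
      refine le_trans (norm_sub_le_max' _ _) (max_le (ih hm' j) ?_)
      rcases le_or_gt (j + 1) m.card with hj | hj
      · rw [norm_mul]
        calc ‖ρ‖ * ‖((m.map fun ρ => X - C ρ).prod).coeff (j + 1)‖
            ≤ t * t ^ (m.card - (j + 1)) := mul_le_mul hρ (ih hm' (j + 1)) (norm_nonneg _) ht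
          _ = t ^ (m.card - j) := by rw [← pow_succ']; congr 1; omega
      · have : ((m.map fun ρ => X - C ρ).prod).coeff (j + 1) = 0 :=
          coeff_eq_zero_of_natDegree_lt (by rw [natDeg_prod]; exact hj)
        rw [this, mul_zero, norm_zero]
        positivity
lemma coeff_prod_big {r : ℝ} (hr : 0 < r) (m : Multiset L) (hm : ∀ ρ ∈ m, r < ‖ρ‖) (i : ℕ) :
    ‖((m.map fun ρ => X - C ρ).prod).coeff i‖ * r ^ i ≤ (m.map fun ρ => ‖ρ‖).prod
    ∧ (1 ≤ i → ‖((m.map fun ρ => X - C ρ).prod).coeff i‖ * r ^ i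
        < (m.map fun ρ => ‖ρ‖).prod) := by
  induction m using Multiset.induction_on generalizing i with
  | empty =>
    cases i with
    | zero => simp
    | succ j =>
      simp only [Multiset.map_zero, Multiset.prod_zero, coeff_one]
      constructor
      · simp [Nat.succ_ne_zero]
      · intro _; simp [Nat.succ_ne_zero]
  | cons ρ m ih =>
    have hρ : r < ‖ρ‖ := hm ρ (Multiset.mem_cons_self _ _)
    have hm' : ∀ x ∈ m, r < ‖x‖ := fun x hx => hm x (Multiset.mem_cons_of_mem hx)
    have hP : 0 < (m.map fun ρ => ‖ρ‖).prod := prod_norm_pos m hr hm'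
    have hρ0 : 0 < ‖ρ‖ := lt_trans hr hρ
    rw [Multiset.map_cons, Multiset.prod_cons, Multiset.map_cons, Multiset.prod_cons]
    cases i with
    | zero =>
      constructor
      · rw [mul_coeff_zero]
        simp only [coeff_sub, coeff_X_zero, coeff_C_zero, zero_sub, norm_mul, norm_neg,
          pow_zero, mul_one]
        have h0 := (ih hm' 0).1
        rw [pow_zero, mul_one] at h0
        exact mul_le_mul_of_nonneg_left h0 hρ0.le
      · intro h; exact absurd h (by omega)
    | succ j =>
      have hco : ((X - C ρ) * (m.map fun ρ => X - C ρ).prod).coeff (j + 1)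
          = ((m.map fun ρ => X - C ρ).prod).coeff j
            - ρ * ((m.map fun ρ => X - C ρ).prod).coeff (j + 1) := by
        rw [sub_mul, coeff_sub, coeff_X_mul, coeff_C_mul]
      have key : ‖((X - C ρ) * (m.map fun ρ => X - C ρ).prod).coeff (j + 1)‖ * r ^ (j + 1)
          < ‖ρ‖ * (m.map fun ρ => ‖ρ‖).prod := by
        rw [hco]
        calc ‖((m.map fun ρ => X - C ρ).prod).coeff j
              - ρ * ((m.map fun ρ => X - C ρ).prod).coeff (j + 1)‖ * r ^ (j + 1)
            ≤ max (‖((m.map fun ρ => X - C ρ).prod).coeff j‖ * r ^ (j + 1))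
                (‖ρ‖ * ‖((m.map fun ρ => X - C ρ).prod).coeff (j + 1)‖ * r ^ (j + 1)) := by
              rw [← max_mul_of_nonneg _ _ (by positivity : (0:ℝ) ≤ r ^ (j+1))]
              exact mul_le_mul_of_nonneg_right
                (le_trans (norm_sub_le_max' _ _) (by rw [norm_mul])) (by positivity)
          _ < ‖ρ‖ * (m.map fun ρ => ‖ρ‖).prod := by
              refine max_lt ?_ ?_
              · calc ‖((m.map fun ρ => X - C ρ).prod).coeff j‖ * r ^ (j + 1)
                    = (‖((m.map fun ρ => X - C ρ).prod).coeff j‖ * r ^ j) * r := by ring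
                  _ ≤ (m.map fun ρ => ‖ρ‖).prod * r :=
                      mul_le_mul_of_nonneg_right (ih hm' j).1 hr.le
                  _ < (m.map fun ρ => ‖ρ‖).prod * ‖ρ‖ :=
                      mul_lt_mul_of_pos_left hρ hP
                  _ = ‖ρ‖ * (m.map fun ρ => ‖ρ‖).prod := mul_comm _ _
              · calc ‖ρ‖ * ‖((m.map fun ρ => X - C ρ).prod).coeff (j + 1)‖ * r ^ (j + 1)
                    = ‖ρ‖ * (‖((m.map fun ρ => X - C ρ).prod).coeff (j + 1)‖ * r ^ (j + 1)) := by
                      ring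
                  _ < ‖ρ‖ * (m.map fun ρ => ‖ρ‖).prod :=
                      mul_lt_mul_of_pos_left ((ih hm' (j + 1)).2 (by omega)) hρ0
      exact ⟨key.le, fun _ => key⟩

variable [IsAlgClosed L]

lemma newton {p : L[X]} (hp : p ≠ 0) {r : ℝ} (hr : 0 < r) :
    ‖p.coeff ((p.roots.filter fun ρ => ‖ρ‖ ≤ r).card)‖
        = ‖p.leadingCoeff‖ * ((p.roots.filter fun ρ => ¬‖ρ‖ ≤ r).map fun ρ => ‖ρ‖).prod ∧
      (∀ i, ‖p.coeff i‖ * r ^ i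
        ≤ ‖p.leadingCoeff‖ * ((p.roots.filter fun ρ => ¬‖ρ‖ ≤ r).map fun ρ => ‖ρ‖).prod
            * r ^ (p.roots.filter fun ρ => ‖ρ‖ ≤ r).card) ∧
      ∀ i, (p.roots.filter fun ρ => ‖ρ‖ ≤ r).card < i → ‖p.coeff i‖ * r ^ i
        < ‖p.leadingCoeff‖ * ((p.roots.filter fun ρ => ¬‖ρ‖ ≤ r).map fun ρ => ‖ρ‖).prod
            * r ^ (p.roots.filter fun ρ => ‖ρ‖ ≤ r).card := by
  classical
  set Rs := p.roots.filter (fun ρ => ‖ρ‖ ≤ r) with hRsdef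
  set Rb := p.roots.filter (fun ρ => ¬‖ρ‖ ≤ r) with hRbdef
  set N := Rs.card with hNdef
  set Ps := (Rs.map fun ρ => X - C ρ).prod with hPsdef
  set Pb := (Rb.map fun ρ => X - C ρ).prod with hPbdef
  set Pi' := (Rb.map fun ρ => ‖ρ‖).prod with hPidef
  have hRb' : ∀ ρ ∈ Rb, r < ‖ρ‖ := fun ρ hρ => lt_of_not_ge (Multiset.mem_filter.mp hρ).2
  have hRs' : ∀ ρ ∈ Rs, ‖ρ‖ ≤ r := fun ρ hρ => (Multiset.mem_filter.mp hρ).2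
  have hPi : 0 < Pi' := prod_norm_pos _ hr hRb'
  have hrk : ∀ k : ℕ, (0:ℝ) < r ^ k := fun k => pow_pos hr k
  have hlead : (0:ℝ) < ‖p.leadingCoeff‖ := norm_pos_iff.mpr (leadingCoeff_ne_zero.mpr hp)
  have hfac : p = C p.leadingCoeff * (Ps * Pb) := by
    have hsplit := Splits.eq_prod_roots (IsAlgClosed.splits p)
    have hadd : Rs + Rb = p.roots := Multiset.filter_add_not _ _
    rw [hPsdef, hPbdef, ← Multiset.prod_add, ← Multiset.map_add, hadd]
    exact hsplit
  have hcoeff : ∀ k, p.coeff k = p.leadingCoeff * (Ps * Pb).coeff k := by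
    intro k
    conv_lhs => rw [hfac]
    rw [coeff_C_mul]
  have hPs_ri : ∀ i, ‖Ps.coeff i‖ * r ^ i ≤ r ^ N := by
    intro i
    rcases le_or_gt i N with hi | hi
    · calc ‖Ps.coeff i‖ * r ^ i ≤ r ^ (N - i) * r ^ i :=
          mul_le_mul_of_nonneg_right (coeff_prod_le hr.le Rs hRs' i) (hrk i).le
        _ = r ^ N := by rw [← pow_add]; congr 1; omega
    · have : Ps.coeff i = 0 :=
        coeff_eq_zero_of_natDegree_lt (by rw [hPsdef, natDeg_prod]; exact hi)
      rw [this, norm_zero, zero_mul]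
      exact (hrk N).le
  have hPb_le : ∀ j, ‖Pb.coeff j‖ * r ^ j ≤ Pi' := fun j => (coeff_prod_big hr Rb hRb' j).1
  have hPb_lt : ∀ j, 1 ≤ j → ‖Pb.coeff j‖ * r ^ j < Pi' :=
    fun j hj => (coeff_prod_big hr Rb hRb' j).2 hj
  have hPsN : Ps.coeff N = 1 := by
    have h1 := (monic_prod Rs).coeff_natDegree
    rwa [natDeg_prod] at h1
  have hPb0 : ‖Pb.coeff 0‖ = Pi' := coeff_zero_norm Rb
  have hdom : ‖Ps.coeff (N, 0).1 * Pb.coeff (N, 0).2‖ = Pi' := by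
    simp only [hPsN, one_mul]
    exact hPb0
  have ha : ‖(Ps * Pb).coeff N‖ = Pi' := by
    rw [coeff_mul]
    rw [norm_sum_eq_of_dominant (f := fun x : ℕ × ℕ => Ps.coeff x.1 * Pb.coeff x.2)
      (i₀ := (N, 0)) (Finset.HasAntidiagonal.mem_antidiagonal.mpr (by simp)) ?_]
    · exact hdom
    · intro x hx hne
      have hx' : x.1 + x.2 = N := Finset.HasAntidiagonal.mem_antidiagonal.mp hx
      have hj : 1 ≤ x.2 := by
        rcases Nat.eq_zero_or_pos x.2 with h0 | h1
        · exact absurd (Prod.ext (by omega) h0) hne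
        · exact h1
      rw [hdom]
      have h1 : x.1 ≤ N := by omega
      calc ‖Ps.coeff x.1 * Pb.coeff x.2‖ = ‖Ps.coeff x.1‖ * ‖Pb.coeff x.2‖ := norm_mul _ _
        _ ≤ r ^ (N - x.1) * ‖Pb.coeff x.2‖ :=
            mul_le_mul_of_nonneg_right (coeff_prod_le hr.le Rs hRs' x.1) (norm_nonneg _)
        _ = ‖Pb.coeff x.2‖ * r ^ x.2 := by rw [mul_comm]; congr 2; omega
        _ < Pi' := hPb_lt x.2 hj
  refine ⟨?_, ?_, ?_⟩
  · rw [hcoeff N, norm_mul, ha]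
  · intro k
    rw [hcoeff k, norm_mul, coeff_mul]
    have hsum : ‖∑ x ∈ Finset.HasAntidiagonal.antidiagonal k, Ps.coeff x.1 * Pb.coeff x.2‖
        ≤ Pi' * r ^ N / r ^ k := by
      refine IsUltrametricDist.norm_sum_le_of_forall_le_of_nonneg (by positivity) ?_
      intro x hx
      have hx' : x.1 + x.2 = k := Finset.HasAntidiagonal.mem_antidiagonal.mp hx
      rw [le_div_iff₀ (hrk k)]
      calc ‖Ps.coeff x.1 * Pb.coeff x.2‖ * r ^ k
          = (‖Ps.coeff x.1‖ * r ^ x.1) * (‖Pb.coeff x.2‖ * r ^ x.2) := by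
            rw [norm_mul, ← hx', pow_add]; ring
        _ ≤ r ^ N * Pi' := mul_le_mul (hPs_ri x.1) (hPb_le x.2) (by positivity) (hrk N).le
        _ = Pi' * r ^ N := mul_comm _ _
    calc ‖p.leadingCoeff‖ * ‖∑ x ∈ Finset.HasAntidiagonal.antidiagonal k, Ps.coeff x.1 * Pb.coeff x.2‖ * r ^ k
        ≤ ‖p.leadingCoeff‖ * (Pi' * r ^ N / r ^ k) * r ^ k := by
          refine mul_le_mul_of_nonneg_right (mul_le_mul_of_nonneg_left hsum hlead.le) (hrk k).le
      _ = ‖p.leadingCoeff‖ * Pi' * r ^ N := by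
          field_simp
  · intro k hk
    rw [hcoeff k, norm_mul, coeff_mul]
    have hsum : ‖∑ x ∈ Finset.HasAntidiagonal.antidiagonal k, Ps.coeff x.1 * Pb.coeff x.2‖
        < Pi' * r ^ N / r ^ k := by
      refine norm_sum_lt _ _ (by positivity) ?_
      intro x hx
      have hx' : x.1 + x.2 = k := Finset.HasAntidiagonal.mem_antidiagonal.mp hx
      rw [lt_div_iff₀ (hrk k)]
      rcases le_or_gt x.1 N with h1 | h1
      · have hj : 1 ≤ x.2 := by omega
        calc ‖Ps.coeff x.1 * Pb.coeff x.2‖ * r ^ k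
            = (‖Ps.coeff x.1‖ * r ^ x.1) * (‖Pb.coeff x.2‖ * r ^ x.2) := by
              rw [norm_mul, ← hx', pow_add]; ring
          _ ≤ r ^ N * (‖Pb.coeff x.2‖ * r ^ x.2) :=
              mul_le_mul_of_nonneg_right (hPs_ri x.1) (by positivity)
          _ < r ^ N * Pi' := mul_lt_mul_of_pos_left (hPb_lt x.2 hj) (hrk N)
          _ = Pi' * r ^ N := mul_comm _ _
      · have : Ps.coeff x.1 = 0 :=
          coeff_eq_zero_of_natDegree_lt (by rw [hPsdef, natDeg_prod]; exact h1)
        rw [this, zero_mul, norm_zero, zero_mul]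
        positivity
    calc ‖p.leadingCoeff‖ * ‖∑ x ∈ Finset.HasAntidiagonal.antidiagonal k, Ps.coeff x.1 * Pb.coeff x.2‖ * r ^ k
        < ‖p.leadingCoeff‖ * (Pi' * r ^ N / r ^ k) * r ^ k := by
          refine mul_lt_mul_of_pos_right (mul_lt_mul_of_pos_left hsum hlead) (hrk k)
      _ = ‖p.leadingCoeff‖ * Pi' * r ^ N := by field_simp

lemma count_eq_of_coeffs {q : L[X]} (hq : q ≠ 0) {r A : ℝ} (hr : 0 < r) (hA : 0 < A) (n : ℕ)
    (hle : ∀ i, ‖q.coeff i‖ * r ^ i ≤ A) (heq : ‖q.coeff n‖ * r ^ n = A)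
    (hlt : ∀ i, n < i → ‖q.coeff i‖ * r ^ i < A) :
    (q.roots.filter fun ρ => ‖ρ‖ ≤ r).card = n := by
  obtain ⟨ha, hb, hc⟩ := newton hq hr
  set N := (q.roots.filter fun ρ => ‖ρ‖ ≤ r).card with hN
  set Q := ‖q.leadingCoeff‖ * ((q.roots.filter fun ρ => ¬‖ρ‖ ≤ r).map fun ρ => ‖ρ‖).prod
    with hQ
  have hAQ : A = Q * r ^ N := by
    refine le_antisymm (heq ▸ hb n) ?_
    calc Q * r ^ N = ‖q.coeff N‖ * r ^ N := by rw [ha]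
      _ ≤ A := hle N
  rcases lt_trichotomy n N with h | h | h
  · exfalso
    have h1 := hlt N h
    rw [hAQ] at h1
    have h2 : ‖q.coeff N‖ * r ^ N = Q * r ^ N := by rw [ha]
    rw [h2] at h1
    exact lt_irrefl _ h1
  · exact h.symm
  · exfalso
    have h1 := hc n h
    rw [heq, hAQ] at h1
    exact lt_irrefl _ h1

lemma exists_root_norm_le {q : L[X]} (hq : q ≠ 0) {r : ℝ} (hr : 0 < r) {n : ℕ} (hn : 1 ≤ n)
    (h : ‖q.coeff 0‖ ≤ ‖q.coeff n‖ * r ^ n) : ∃ ρ ∈ q.roots, ‖ρ‖ ≤ r := by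
  by_contra hcon
  push_neg at hcon
  have hall : ∀ ρ ∈ q.roots, r < ‖ρ‖ := hcon
  have hfs : (q.roots.filter fun ρ => ‖ρ‖ ≤ r) = 0 := by
    rw [Multiset.filter_eq_nil]
    intro ρ hρ
    exact not_le.mpr (hall ρ hρ)
  have hfb : (q.roots.filter fun ρ => ¬‖ρ‖ ≤ r) = q.roots := by
    rw [Multiset.filter_eq_self]
    intro ρ hρ
    exact not_le.mpr (hall ρ hρ)
  obtain ⟨ha, hb, hc⟩ := newton hq hr
  rw [hfs, hfb] at ha hc
  simp only [Multiset.card_zero] at ha hc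
  have h1 := hc n (by omega)
  simp only [pow_zero, mul_one] at h1
  rw [← ha] at h1
  linarith

lemma finsum_count (p : L[X]) (a : L) (r : ℝ) :
    (∑ᶠ z ∈ Metric.closedBall a r, rootMultiplicity z p)
      = (p.roots.filter fun z => dist z a ≤ r).card := by
  classical
  rcases eq_or_ne p 0 with rfl | hp
  · rw [roots_zero]
    simp only [Multiset.filter_zero, Multiset.card_zero]
    rw [finsum_mem_eq_zero_of_forall_eq_zero]
    intro z _
    exact rootMultiplicity_zero
  · have hsupp : Function.support (fun z => (rootMultiplicity z p : ℕ)) ⊆ ↑p.roots.toFinset := by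
      intro z hz
      simp only [Function.mem_support] at hz
      have : p.IsRoot z := by
        by_contra hroot
        exact hz (rootMultiplicity_eq_zero hroot)
      exact Finset.mem_coe.mpr (Multiset.mem_toFinset.mpr (mem_roots'.mpr ⟨hp, this⟩))
    have heq : (∑ᶠ z ∈ Metric.closedBall a r, rootMultiplicity z p)
        = ∑ z ∈ p.roots.toFinset.filter (fun z => dist z a ≤ r), rootMultiplicity z p := by
      refine finsum_mem_eq_sum_of_inter_support_eq _ ?_
      ext z
      simp only [Set.mem_inter_iff, Function.mem_support, Finset.coe_filter,
        Multiset.mem_toFinset, Set.mem_setOf_eq, Metric.mem_closedBall]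
      constructor
      · rintro ⟨hball, hne⟩
        have hz : z ∈ p.roots.toFinset := hsupp hne
        exact ⟨⟨Multiset.mem_toFinset.mp hz, hball⟩, hne⟩
      · rintro ⟨⟨_, hball⟩, hne⟩
        exact ⟨hball, hne⟩
    rw [heq]
    have hcard : (p.roots.filter fun z => dist z a ≤ r).card
        = ∑ z ∈ p.roots.toFinset.filter (fun z => dist z a ≤ r),
            (p.roots.filter fun z => dist z a ≤ r).count z := by
      rw [← Multiset.toFinset_sum_count_eq (p.roots.filter fun z => dist z a ≤ r)]
      refine Finset.sum_congr ?_ (fun _ _ => rfl)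
      rw [Multiset.toFinset_filter]
    rw [hcard]
    refine Finset.sum_congr rfl ?_
    intro z hz
    rw [Multiset.count_filter, if_pos (Finset.mem_filter.mp hz).2, count_roots]

lemma roots_taylor (p : L[X]) (a : L) :
    (Polynomial.taylor a p).roots = p.roots.map (fun ρ => ρ - a) := by
  rcases eq_or_ne p 0 with rfl | hp
  · simp
  · have hc : p.leadingCoeff ≠ 0 := leadingCoeff_ne_zero.mpr hp
    conv_lhs => rw [Splits.eq_prod_roots (IsAlgClosed.splits p)]
    rw [taylor_apply, mul_comp, C_comp, multiset_prod_comp, Multiset.map_map]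
    simp only [Function.comp_def]
    have hmap : (p.roots.map fun ρ => ((X - C ρ).comp (X + C a)))
        = (p.roots.map fun ρ => ρ - a).map fun ρ => X - C ρ := by
      rw [Multiset.map_map]
      refine Multiset.map_congr rfl ?_
      intro ρ _
      simp only [Function.comp_apply, sub_comp, X_comp, C_comp, map_sub]
      ring
    rw [hmap, roots_C_mul _ hc, roots_multiset_prod_X_sub_C]

end FPC
open FPC

theorem fixed_point_count' {L : Type*} [NormedField L] [IsUltrametricDist L] [CompleteSpace L] [IsAlgClosed L]
    (hdense : ∀ r : ℝ, 0 < r → ∀ ε : ℝ, 0 < ε → ∃ x : L, x ≠ 0 ∧ |‖x‖ - r| < ε)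
    (φ : Polynomial L) (a a' : L) (r r' : ℝ) (hr : 0 < r) (hr' : 0 < r')
    (himg : (fun z => φ.eval z) '' Metric.closedBall a r = Metric.closedBall a' r')
    (hsub : Metric.closedBall a r ⊆ Metric.closedBall a' r')
    (d : ℕ) (hd1 : 1 ≤ d)
    (hdeg2 : ∀ w ∈ Metric.closedBall a' r',
      (∑ᶠ z ∈ {z ∈ Metric.closedBall a r | φ.eval z = w},
        Polynomial.rootMultiplicity z (φ - Polynomial.C (φ.eval z))) = d)
    (hcond : 1 < d ∨ Metric.closedBall a r ⊂ Metric.closedBall a' r') :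
    (∑ᶠ z ∈ Metric.closedBall a r, Polynomial.rootMultiplicity z (φ - Polynomial.X)) = d := by
  classical
  have haB : a ∈ Metric.closedBall a r := Metric.mem_closedBall_self hr.le
  have ha'B' : a' ∈ Metric.closedBall a' r' := Metric.mem_closedBall_self hr'.le
  -- φ is nonconstant
  have hD : φ.natDegree ≠ 0 := by
    intro h0
    have hφC : φ = C (φ.coeff 0) := eq_C_of_natDegree_eq_zero h0
    have h1 := hdeg2 a' ha'B'
    rw [finsum_mem_eq_zero_of_forall_eq_zero ?_] at h1
    · omega
    · intro z _
      rw [hφC]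
      simp only [eval_C, sub_self]
      exact rootMultiplicity_zero
  -- setup
  set q0 := Polynomial.taylor a φ with hq0def
  set w0 := φ.eval a with hw0def
  have hb0 : q0.coeff 0 = w0 := taylor_coeff_zero a φ
  have hw0B' : w0 ∈ Metric.closedBall a' r' := himg ▸ ⟨a, haB, rfl⟩
  have hqw : ∀ w : L, Polynomial.taylor a (φ - C w) = q0 - C w := by
    intro w
    rw [map_sub, taylor_C]
  have hpw : ∀ w : L, φ - C w ≠ 0 := by
    intro w hzero
    have h1 : (φ - C w).natDegree = φ.natDegree := natDegree_sub_C
    rw [hzero, natDegree_zero] at h1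
    exact hD h1.symm
  have hqw0 : ∀ w : L, q0 - C w ≠ 0 := by
    intro w h
    exact hpw w (taylor_injective a (by rw [hqw w, h, map_zero]))
  -- degree hypothesis in terms of root counts of shifted polynomials
  have hcount : ∀ w ∈ Metric.closedBall a' r',
      ((q0 - C w).roots.filter fun ρ => ‖ρ‖ ≤ r).card = d := by
    intro w hw
    have h1 := hdeg2 w hw
    have h2 : (∑ᶠ z ∈ {z ∈ Metric.closedBall a r | φ.eval z = w},
          Polynomial.rootMultiplicity z (φ - Polynomial.C (φ.eval z)))
        = ∑ᶠ z ∈ {z ∈ Metric.closedBall a r | φ.eval z = w},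
            Polynomial.rootMultiplicity z (φ - C w) := by
      refine finsum_mem_congr rfl ?_
      intro z hz
      rw [hz.2]
    have h3 : (∑ᶠ z ∈ {z ∈ Metric.closedBall a r | φ.eval z = w},
          Polynomial.rootMultiplicity z (φ - C w))
        = ∑ᶠ z ∈ Metric.closedBall a r, Polynomial.rootMultiplicity z (φ - C w) := by
      refine finsum_mem_inter_support_eq _ _ _ ?_
      ext z
      simp only [Set.mem_inter_iff, Function.mem_support, Set.mem_sep_iff]
      constructor
      · rintro ⟨⟨hzB, _⟩, hne⟩
        exact ⟨hzB, hne⟩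
      · rintro ⟨hzB, hne⟩
        have hroot : (φ - C w).IsRoot z := by
          by_contra hnr
          exact hne (rootMultiplicity_eq_zero hnr)
        have : φ.eval z = w := by
          have := hroot
          simp only [IsRoot.def, eval_sub, eval_C, sub_eq_zero] at this
          exact this
        exact ⟨⟨hzB, this⟩, hne⟩
    have h5 : ((φ - C w).roots.filter fun z => dist z a ≤ r).card = d := by
      rw [← finsum_count (φ - C w) a r, ← h3, ← h2, h1]
    have h6 : (q0 - C w).roots = (φ - C w).roots.map (fun ρ => ρ - a) := by
      rw [← hqw w]
      exact roots_taylor _ _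
    rw [h6, Multiset.filter_map, Multiset.card_map, ← h5]
    congr 1
    refine Multiset.filter_congr ?_
    intro ρ _
    simp [Function.comp, dist_eq_norm]
  -- Newton data at w0
  have hNw0 := hcount w0 hw0B'
  obtain ⟨na, nb, nc⟩ := newton (hqw0 w0) hr
  rw [hNw0] at na nb nc
  set s := ‖(q0 - C w0).leadingCoeff‖
      * (((q0 - C w0).roots.filter fun ρ => ¬‖ρ‖ ≤ r).map fun ρ => ‖ρ‖).prod * r ^ d
    with hsdef
  have hs0 : 0 < s := by
    refine mul_pos (mul_pos ?_ ?_) (pow_pos hr d)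
    · exact norm_pos_iff.mpr (leadingCoeff_ne_zero.mpr (hqw0 w0))
    · exact prod_norm_pos _ hr (fun ρ hρ => lt_of_not_ge (Multiset.mem_filter.mp hρ).2)
  have hbig : ∀ (w : L) (i : ℕ), 1 ≤ i → (q0 - C w).coeff i = q0.coeff i := by
    intro w i hi
    rw [coeff_sub, coeff_C, if_neg (by omega), sub_zero]
  have hbd : ‖q0.coeff d‖ * r ^ d = s := by
    rw [← hbig w0 d hd1, na]
  have hble : ∀ i, 1 ≤ i → ‖q0.coeff i‖ * r ^ i ≤ s := by
    intro i hi
    rw [← hbig w0 i hi]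
    exact nb i
  have hblt : ∀ i, d < i → ‖q0.coeff i‖ * r ^ i < s := by
    intro i hi
    rw [← hbig w0 i (by omega)]
    exact nc i hi
  -- value bound
  have hval : ∀ x : L, ‖x‖ ≤ r → ‖(q0 - C w0).eval x‖ ≤ s := by
    intro x hx
    rw [eval_eq_sum_range]
    refine IsUltrametricDist.norm_sum_le_of_forall_le_of_nonneg hs0.le ?_
    intro i _
    rw [norm_mul, norm_pow]
    calc ‖(q0 - C w0).coeff i‖ * ‖x‖ ^ i
        ≤ ‖(q0 - C w0).coeff i‖ * r ^ i :=
          mul_le_mul_of_nonneg_left (pow_le_pow_left₀ (norm_nonneg x) hx i) (norm_nonneg _)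
      _ ≤ s := nb i
  -- preimages exist
  have hpre : ∀ w ∈ Metric.closedBall a' r', ∃ z ∈ Metric.closedBall a r, φ.eval z = w := by
    intro w hw
    have h1 := hcount w hw
    have h2 : ((q0 - C w).roots.filter fun ρ => ‖ρ‖ ≤ r) ≠ 0 := by
      intro h0
      rw [h0, Multiset.card_zero] at h1
      omega
    obtain ⟨ρ, hρ⟩ := Multiset.exists_mem_of_ne_zero h2
    obtain ⟨hρroots, hρr⟩ := Multiset.mem_filter.mp hρ
    refine ⟨ρ + a, ?_, ?_⟩
    · simpa [Metric.mem_closedBall, dist_eq_norm] using hρr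
    · have hroot := isRoot_of_mem_roots hρroots
      rw [IsRoot.def, ← hqw w, taylor_eval] at hroot
      simp only [eval_sub, eval_C, sub_eq_zero] at hroot
      exact hroot
  -- distances within B'
  have hB'd : ∀ x y : L, x ∈ Metric.closedBall a' r' → y ∈ Metric.closedBall a' r' →
      dist x y ≤ r' := by
    intro x y hx hy
    calc dist x y ≤ max (dist x a') (dist a' y) := IsUltrametricDist.dist_triangle_max x a' y
      _ ≤ r' := max_le hx (by rw [dist_comm]; exact hy)
  have hup : ∀ w ∈ Metric.closedBall a' r', dist w w0 ≤ s := by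
    intro w hw
    obtain ⟨z, hz, rfl⟩ := hpre w hw
    have hx : ‖z - a‖ ≤ r := by rw [← dist_eq_norm]; exact hz
    have hv := hval (z - a) hx
    rw [← hqw w0, taylor_eval, sub_add_cancel] at hv
    simp only [eval_sub, eval_C] at hv
    rw [dist_eq_norm]
    exact hv
  -- radii comparisons via density
  have hradle : ∀ (u : L) (ρt t : ℝ), 0 < ρt →
      (∀ x ∈ Metric.closedBall u ρt, dist x u ≤ t) → ρt ≤ t := by
    intro u ρt t hρt hball
    refine le_of_forall_pos_le_add ?_
    intro ε hε
    have hmin : 0 < min ε ρt := lt_min hε hρt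
    set ε' := min ε ρt / 2 with hε'def
    have hε' : 0 < ε' := by positivity
    have htpos : 0 < ρt - ε' := by
      have : min ε ρt ≤ ρt := min_le_right _ _
      simp only [hε'def]
      linarith
    obtain ⟨x, hx0, hxd⟩ := hdense (ρt - ε') htpos ε' hε'
    obtain ⟨hxl, hxu⟩ := abs_lt.mp hxd
    have hmem : u + x ∈ Metric.closedBall u ρt := by
      simp only [Metric.mem_closedBall, dist_eq_norm, add_sub_cancel_left]
      linarith
    have := hball (u + x) hmem
    rw [dist_eq_norm, add_sub_cancel_left] at this
    have h2ε : 2 * ε' ≤ ε := by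
      simp only [hε'def]
      have : min ε ρt ≤ ε := min_le_left _ _
      linarith
    linarith
  have hrr' : r ≤ r' := hradle a r r' hr (fun x hx => hB'd x a (hsub hx) (hsub haB))
  have hr's : r' ≤ s := by
    refine hradle a' r' s hr' ?_
    intro x hx
    calc dist x a' ≤ max (dist x w0) (dist w0 a') := IsUltrametricDist.dist_triangle_max x w0 a'
      _ ≤ s := by
        refine max_le (hup x hx) ?_
        rw [dist_comm]
        exact hup a' ha'B'
  have hsr' : s ≤ r' := by
    refine le_of_forall_pos_le_add ?_
    intro ε hε
    have hmin : 0 < min ε s := lt_min hε hs0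
    set ε' := min ε s / 2 with hε'def
    have hε' : 0 < ε' := by positivity
    have hspos : 0 < s - ε' := by
      have : min ε s ≤ s := min_le_right _ _
      simp only [hε'def]
      linarith
    obtain ⟨x, hx0, hxd⟩ := hdense (s - ε') hspos ε' hε'
    obtain ⟨hxl, hxu⟩ := abs_lt.mp hxd
    have hxs : ‖x‖ ≤ s := by linarith
    have hcoeffd : ‖(q0 - C (w0 + x)).coeff d‖ * r ^ d = s := by
      rw [hbig (w0 + x) d hd1]
      exact hbd
    have h0c : ‖(q0 - C (w0 + x)).coeff 0‖ ≤ ‖(q0 - C (w0 + x)).coeff d‖ * r ^ d := by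
      rw [hcoeffd, coeff_sub, coeff_C, if_pos rfl, hb0]
      have : w0 - (w0 + x) = -x := by ring
      rw [this, norm_neg]
      exact hxs
    obtain ⟨ρ, hρroots, hρr⟩ := exists_root_norm_le (hqw0 (w0 + x)) hr hd1 h0c
    have hzB : ρ + a ∈ Metric.closedBall a r := by
      simpa [Metric.mem_closedBall, dist_eq_norm] using hρr
    have hw : φ.eval (ρ + a) = w0 + x := by
      have hroot := isRoot_of_mem_roots hρroots
      rw [IsRoot.def, ← hqw (w0 + x), taylor_eval] at hroot
      simp only [eval_sub, eval_C, sub_eq_zero] at hroot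
      exact hroot
    have hwB' : w0 + x ∈ Metric.closedBall a' r' := himg ▸ ⟨ρ + a, hzB, hw⟩
    have hxr' : ‖x‖ ≤ r' := by
      have := hB'd (w0 + x) w0 hwB' hw0B'
      rwa [dist_eq_norm, add_sub_cancel_left] at this
    have h2ε : 2 * ε' ≤ ε := by
      simp only [hε'def]
      have : min ε s ≤ ε := min_le_left _ _
      linarith
    linarith
  have hsr : s = r' := le_antisymm hsr' hr's
  -- the fixed point polynomial
  set qg := q0 - (X + C a) with hqgdef
  have hqg_taylor : Polynomial.taylor a (φ - X) = qg := by
    rw [map_sub, taylor_X]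
  have hg0 : ‖qg.coeff 0‖ ≤ s := by
    have : qg.coeff 0 = w0 - a := by
      rw [hqgdef, coeff_sub, coeff_add, coeff_X_zero, coeff_C_zero, zero_add, hb0]
    rw [this, ← dist_eq_norm, hsr]
    exact hB'd w0 a hw0B' (hsub haB)
  have hgi : ∀ i, 2 ≤ i → qg.coeff i = q0.coeff i := by
    intro i hi
    rw [hqgdef, coeff_sub, coeff_add, coeff_C, if_neg (by omega), coeff_X, if_neg (by omega),
      add_zero, sub_zero]
  have hg1 : qg.coeff 1 = q0.coeff 1 - 1 := by
    rw [hqgdef, coeff_sub, coeff_add, coeff_X_one, coeff_C, if_neg (by omega), add_zero]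
  obtain ⟨hqgne, hle, heq, hlt⟩ : qg ≠ 0 ∧ (∀ i, ‖qg.coeff i‖ * r ^ i ≤ s)
      ∧ ‖qg.coeff d‖ * r ^ d = s ∧ (∀ i, d < i → ‖qg.coeff i‖ * r ^ i < s) := by
    rcases (by omega : d = 1 ∨ 2 ≤ d) with hd2 | hd2
    · -- d = 1, need strict inclusion
      have hstrict : Metric.closedBall a r ⊂ Metric.closedBall a' r' := by
        rcases hcond with h | h
        · omega
        · exact h
      have hrne : r ≠ r' := by
        intro hre
        refine hstrict.ne (subset_antisymm hsub ?_)
        intro x hx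
        have h1 : dist a' a ≤ r := by
          rw [dist_comm, hre]
          exact hsub haB
        calc dist x a ≤ max (dist x a') (dist a' a) := IsUltrametricDist.dist_triangle_max _ _ _
          _ ≤ r := max_le (hre ▸ hx) h1
      have hrlt : r < r' := lt_of_le_of_ne hrr' hrne
      subst hd2
      have hb1 : ‖q0.coeff 1‖ * r = s := by
        have := hbd
        rwa [pow_one] at this
      have hb1gt : 1 < ‖q0.coeff 1‖ := by
        by_contra hcon
        push_neg at hcon
        have : ‖q0.coeff 1‖ * r ≤ r := by nlinarith [hr.le]
        rw [hb1, hsr] at this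
        linarith
      have hg1norm : ‖qg.coeff 1‖ = ‖q0.coeff 1‖ := by
        rw [hg1, sub_eq_add_neg,
          IsUltrametricDist.norm_add_eq_max_of_norm_ne_norm (by
            rw [norm_neg, norm_one]
            exact ne_of_gt hb1gt)]
        rw [norm_neg, norm_one]
        exact max_eq_left hb1gt.le
      refine ⟨?_, ?_, ?_, ?_⟩
      · intro h0
        rw [h0] at hg1norm
        simp only [coeff_zero, norm_zero] at hg1norm
        linarith
      · intro i
        match i with
        | 0 => simpa using hg0
        | 1 =>
          rw [pow_one, hg1norm, hb1]
        | (j+2) =>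
          rw [hgi (j+2) (by omega)]
          exact (hblt (j+2) (by omega)).le
      · rw [pow_one, hg1norm, hb1]
      · intro i hi
        rw [hgi i (by omega)]
        exact hblt i hi
    · -- 2 ≤ d
      have hle1 : ‖qg.coeff 1‖ * r ≤ s := by
        rw [hg1]
        calc ‖q0.coeff 1 - 1‖ * r ≤ max ‖q0.coeff 1‖ ‖(1:L)‖ * r :=
              mul_le_mul_of_nonneg_right (norm_sub_le_max' _ _) hr.le
          _ = max (‖q0.coeff 1‖ * r) (‖(1:L)‖ * r) := (max_mul_of_nonneg _ _ hr.le)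
          _ ≤ s := by
            refine max_le ?_ ?_
            · have := hble 1 (by omega)
              rwa [pow_one] at this
            · rw [norm_one, one_mul, hsr]
              exact hrr'
      refine ⟨?_, ?_, ?_, ?_⟩
      · intro h0
        have h1 : ‖q0.coeff d‖ * r ^ d = s := hbd
        have h2 : q0.coeff d = 0 := by rw [← hgi d hd2, h0, Polynomial.coeff_zero]
        rw [h2, norm_zero, zero_mul] at h1
        linarith
      · intro i
        match i with
        | 0 => simpa using hg0
        | 1 =>
          rw [pow_one] at *
          exact hle1
        | (j+2) =>
          rw [hgi (j+2) (by omega)]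
          exact hble (j+2) (by omega)
      · rw [hgi d hd2]
        exact hbd
      · intro i hi
        rw [hgi i (by omega)]
        exact hblt i hi
  have hcard := count_eq_of_coeffs hqgne hr hs0 d hle heq hlt
  rw [finsum_count (φ - X) a r]
  have h6 : qg.roots = (φ - X).roots.map (fun ρ => ρ - a) := by
    rw [← hqg_taylor]
    exact roots_taylor _ _
  rw [h6, Multiset.filter_map, Multiset.card_map] at hcard
  rw [← hcard]
  congr 1
  refine Multiset.filter_congr ?_
  intro ρ _
  simp [Function.comp, dist_eq_norm]

/-- **Fixed point count in a ball.** If `φ(B) = B' ⊇ B` with degree `d` on `B`, and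
either `d > 1` or `B ⊊ B'`, then `φ` has exactly `d` fixed points in `B` counted with
multiplicity. -/
theorem fixed_point_count {L : Type*} [NormedField L] [IsUltrametricDist L] [CompleteSpace L] [IsAlgClosed L]
    (hdense : ∀ r : ℝ, 0 < r → ∀ ε : ℝ, 0 < ε → ∃ x : L, x ≠ 0 ∧ |‖x‖ - r| < ε)
    (hres : ∀ q : ℚ, q ≠ 0 → ‖(q : L)‖ = 1)
    (φ : Polynomial L) (a a' : L) (r r' : ℝ) (hr : 0 < r) (hr' : 0 < r')
    (himg : (fun z => φ.eval z) '' Metric.closedBall a r = Metric.closedBall a' r')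
    (hsub : Metric.closedBall a r ⊆ Metric.closedBall a' r')
    (d : ℕ) (hdeg : HasDegOn φ (Metric.closedBall a r) (Metric.closedBall a' r') d)
    (hcond : 1 < d ∨ Metric.closedBall a r ⊂ Metric.closedBall a' r') :
    (∑ᶠ z ∈ Metric.closedBall a r, Polynomial.rootMultiplicity z (φ - Polynomial.X)) = d := by
  obtain ⟨hd1, hdeg2⟩ := hdeg
  exact fixed_point_count' hdense φ a a' r r' hr hr' himg hsub d hd1 hdeg2 hcond
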